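/- arXiv:1707.04814 — 4 statements merged into one kernel-verified Lean document; each statement's English description precedes it below -/
import Mathlib

section
/- If h(z) is a polynomial of degree n with complex coefficients all of whose zeros lie in the closed unit disk |z| ≤ 1, then for any integer d ≥ n and any complex number λ with |λ| = 1, the polynomial P(z) = z^{d-n} h(z) + λ z^n \overline{h}(1/z) (where \overline{h} denotes the polynomial with conjugated coefficients, so z^n \overline{h}(1/z) is the conjugate-reciprocal of h) has all of its zeros on the unit circle |z| = 1, provided P is not identically zero. -/
open Polynomial Complex

/-- The conjugate-reciprocal of `h` relative to degree `n`:
`z ^ n * conj(h)(1/z) = ∑ conj (a_{n-j}) z ^ j`. -/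
noncomputable def conjReciprocal (n : ℕ) (h : Polynomial ℂ) : Polynomial ℂ :=
  Polynomial.reflect n (h.map (starRingEnd ℂ))


lemma normSq_diff (z r : ℂ) :
    ‖z - r‖ ^ 2 - ‖1 - (starRingEnd ℂ) r * z‖ ^ 2 = (‖z‖ ^ 2 - 1) * (1 - ‖r‖ ^ 2) := by
  have e : ∀ w : ℂ, ‖w‖ ^ 2 = Complex.normSq w := by
    intro w; rw [Complex.sq_norm]
  simp only [e]
  simp only [Complex.normSq_apply, Complex.sub_re, Complex.sub_im, Complex.mul_re,
    Complex.mul_im, Complex.one_re, Complex.one_im, Complex.conj_re, Complex.conj_im]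
  ring

lemma norm_le_outside {z r : ℂ} (hz : 1 ≤ ‖z‖) (hr : ‖r‖ ≤ 1) :
    ‖1 - (starRingEnd ℂ) r * z‖ ≤ ‖z - r‖ := by
  have key := normSq_diff z r
  have hz2 : 1 ≤ ‖z‖ ^ 2 := by nlinarith [norm_nonneg z]
  have hr2 : ‖r‖ ^ 2 ≤ 1 := by nlinarith [norm_nonneg r]
  have hprod : 0 ≤ (‖z‖ ^ 2 - 1) * (1 - ‖r‖ ^ 2) := mul_nonneg (by linarith) (by linarith)
  have h2 : ‖1 - (starRingEnd ℂ) r * z‖ ^ 2 ≤ ‖z - r‖ ^ 2 := by linarith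
  calc ‖1 - (starRingEnd ℂ) r * z‖ = Real.sqrt (‖1 - (starRingEnd ℂ) r * z‖ ^ 2) :=
        (Real.sqrt_sq (norm_nonneg _)).symm
    _ ≤ Real.sqrt (‖z - r‖ ^ 2) := Real.sqrt_le_sqrt h2
    _ = ‖z - r‖ := Real.sqrt_sq (norm_nonneg _)

lemma norm_lt_outside {z r : ℂ} (hz : 1 < ‖z‖) (hr : ‖r‖ < 1) :
    ‖1 - (starRingEnd ℂ) r * z‖ < ‖z - r‖ := by
  have key := normSq_diff z r
  have hz2 : 1 < ‖z‖ ^ 2 := by nlinarith [norm_nonneg z]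
  have hr2 : ‖r‖ ^ 2 < 1 := by nlinarith [norm_nonneg r]
  have hprod : 0 < (‖z‖ ^ 2 - 1) * (1 - ‖r‖ ^ 2) := mul_pos (by linarith) (by linarith)
  have h2 : ‖1 - (starRingEnd ℂ) r * z‖ ^ 2 < ‖z - r‖ ^ 2 := by linarith
  calc ‖1 - (starRingEnd ℂ) r * z‖ = Real.sqrt (‖1 - (starRingEnd ℂ) r * z‖ ^ 2) :=
        (Real.sqrt_sq (norm_nonneg _)).symm
    _ < Real.sqrt (‖z - r‖ ^ 2) := Real.sqrt_lt_sqrt (sq_nonneg _) h2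
    _ = ‖z - r‖ := Real.sqrt_sq (norm_nonneg _)

lemma norm_le_inside {z r : ℂ} (hz : ‖z‖ ≤ 1) (hr : ‖r‖ ≤ 1) :
    ‖z - r‖ ≤ ‖1 - (starRingEnd ℂ) r * z‖ := by
  have key := normSq_diff z r
  have hz2 : ‖z‖ ^ 2 ≤ 1 := by nlinarith [norm_nonneg z]
  have hr2 : ‖r‖ ^ 2 ≤ 1 := by nlinarith [norm_nonneg r]
  have hprod : (‖z‖ ^ 2 - 1) * (1 - ‖r‖ ^ 2) ≤ 0 :=
    mul_nonpos_of_nonpos_of_nonneg (by linarith) (by linarith)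
  have h2 : ‖z - r‖ ^ 2 ≤ ‖1 - (starRingEnd ℂ) r * z‖ ^ 2 := by linarith
  calc ‖z - r‖ = Real.sqrt (‖z - r‖ ^ 2) := (Real.sqrt_sq (norm_nonneg _)).symm
    _ ≤ Real.sqrt (‖1 - (starRingEnd ℂ) r * z‖ ^ 2) := Real.sqrt_le_sqrt h2
    _ = ‖1 - (starRingEnd ℂ) r * z‖ := Real.sqrt_sq (norm_nonneg _)

lemma norm_lt_inside {z r : ℂ} (hz : ‖z‖ < 1) (hr : ‖r‖ < 1) :
    ‖z - r‖ < ‖1 - (starRingEnd ℂ) r * z‖ := by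
  have key := normSq_diff z r
  have hz2 : ‖z‖ ^ 2 < 1 := by nlinarith [norm_nonneg z]
  have hr2 : ‖r‖ ^ 2 < 1 := by nlinarith [norm_nonneg r]
  have hprod : (‖z‖ ^ 2 - 1) * (1 - ‖r‖ ^ 2) < 0 :=
    mul_neg_of_neg_of_pos (by linarith) (by linarith)
  have h2 : ‖z - r‖ ^ 2 < ‖1 - (starRingEnd ℂ) r * z‖ ^ 2 := by linarith
  calc ‖z - r‖ = Real.sqrt (‖z - r‖ ^ 2) := (Real.sqrt_sq (norm_nonneg _)).symm
    _ < Real.sqrt (‖1 - (starRingEnd ℂ) r * z‖ ^ 2) := Real.sqrt_lt_sqrt (sq_nonneg _) h2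
    _ = ‖1 - (starRingEnd ℂ) r * z‖ := Real.sqrt_sq (norm_nonneg _)

lemma pos_outside {z r : ℂ} (hz : 1 < ‖z‖) (hr : ‖r‖ ≤ 1) : 0 < ‖z - r‖ := by
  rw [norm_pos_iff, sub_ne_zero]
  rintro rfl; exact absurd hr (not_le.mpr hz)

lemma pos_inside {z r : ℂ} (hz : ‖z‖ < 1) (hr : ‖r‖ ≤ 1) :
    0 < ‖1 - (starRingEnd ℂ) r * z‖ := by
  rw [norm_pos_iff, sub_ne_zero]
  intro he
  have : (1 : ℝ) = ‖(starRingEnd ℂ) r * z‖ := by rw [← he]; simp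
  rw [norm_mul] at this
  have hcr : ‖(starRingEnd ℂ) r‖ = ‖r‖ := by simp
  nlinarith [norm_nonneg z, norm_nonneg r]

lemma prod_lt_prod_of_mem (R : Multiset ℂ) (f g : ℂ → ℝ)
    (h0 : ∀ r ∈ R, 0 ≤ g r) (hle : ∀ r ∈ R, g r ≤ f r) (hpos : ∀ r ∈ R, 0 < f r)
    (r₀ : ℂ) (hr₀ : r₀ ∈ R) (hstrict : g r₀ < f r₀) :
    (R.map g).prod < (R.map f).prod := by
  obtain ⟨R', rfl⟩ : ∃ R', R = r₀ ::ₘ R' := ⟨R.erase r₀, (Multiset.cons_erase hr₀).symm⟩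
  simp only [Multiset.map_cons, Multiset.prod_cons]
  have hmem : ∀ r ∈ R', r ∈ r₀ ::ₘ R' := fun r hr => Multiset.mem_cons_of_mem hr
  have hle' : (R'.map g).prod ≤ (R'.map f).prod :=
    Multiset.prod_map_le_prod_map₀ g f (fun i hi => h0 i (hmem i hi))
      (fun i hi => hle i (hmem i hi))
  have hf' : 0 < (R'.map f).prod := by
    apply Multiset.prod_pos
    intro x hx
    obtain ⟨r, hr, rfl⟩ := Multiset.mem_map.mp hx
    exact hpos r (hmem r hr)
  calc g r₀ * (R'.map g).prod ≤ g r₀ * (R'.map f).prod :=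
        mul_le_mul_of_nonneg_left hle' (h0 r₀ (Multiset.mem_cons_self _ _))
    _ < f r₀ * (R'.map f).prod := mul_lt_mul_of_pos_right hstrict hf'

lemma conjReciprocal_eq (h : Polynomial ℂ) (n : ℕ) (hdeg : h.natDegree = n) :
    conjReciprocal n h = C ((starRingEnd ℂ) h.leadingCoeff) *
      (h.roots.map fun r => 1 - C ((starRingEnd ℂ) r) * X).prod := by
  have hsplit : Splits h := IsAlgClosed.splits h
  have hcard : h.roots.card = n := (splits_iff_card_roots.mp hsplit).trans hdeg
  have hfact : C h.leadingCoeff * (h.roots.map fun r => X - C r).prod = h :=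
    C_leadingCoeff_mul_prod_multiset_X_sub_C (splits_iff_card_roots.mp hsplit)
  have hmap : h.map (starRingEnd ℂ) = C ((starRingEnd ℂ) h.leadingCoeff) *
      (h.roots.map fun r => X - C ((starRingEnd ℂ) r)).prod := by
    conv_lhs => rw [← hfact]
    rw [Polynomial.map_mul, map_C]
    congr 1
    rw [← Polynomial.coe_mapRingHom, map_multiset_prod, Multiset.map_map]
    congr 1
    ext r
    simp [Polynomial.coe_mapRingHom]
  apply Polynomial.eq_of_infinite_eval_eq
  apply Set.Infinite.mono (s := {(0:ℂ)}ᶜ) ?_ ((Set.finite_singleton (0:ℂ)).infinite_compl)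
  intro z hz0
  simp only [Set.mem_compl_iff, Set.mem_singleton_iff] at hz0
  simp only [Set.mem_setOf_eq]
  letI : Invertible (z⁻¹) := invertibleOfNonzero (inv_ne_zero hz0)
  have hinv : (⅟(z⁻¹) : ℂ) = z := by rw [invOf_eq_inv _, inv_inv]
  have hrefl := eval₂_reflect_mul_pow (RingHom.id ℂ) (z⁻¹) n (h.map (starRingEnd ℂ))
    (by rw [Polynomial.natDegree_map, hdeg])
  rw [hinv] at hrefl
  have hev : eval z (conjReciprocal n h) * (z⁻¹) ^ n = eval z⁻¹ (h.map (starRingEnd ℂ)) := by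
    exact hrefl
  have e1 : eval z⁻¹ (h.map (starRingEnd ℂ)) =
      (starRingEnd ℂ) h.leadingCoeff * (h.roots.map fun r => z⁻¹ - (starRingEnd ℂ) r).prod := by
    rw [hmap]
    simp [eval_multiset_prod, Multiset.map_map, Function.comp]
  have e2 : eval z (conjReciprocal n h) =
      z ^ n * ((starRingEnd ℂ) h.leadingCoeff * (h.roots.map fun r => z⁻¹ - (starRingEnd ℂ) r).prod) := by
    rw [← e1, ← hev, inv_pow]
    field_simp
  have e3 : (h.roots.map fun r => (1 : ℂ) - (starRingEnd ℂ) r * z).prod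
      = z ^ n * (h.roots.map fun r => z⁻¹ - (starRingEnd ℂ) r).prod := by
    rw [← hcard, ← Multiset.prod_replicate, ← Multiset.map_const', ← Multiset.prod_map_mul]
    congr 1
    apply Multiset.map_congr rfl
    intro r _
    field_simp
  rw [e2, eval_mul, eval_C, eval_multiset_prod, Multiset.map_map]
  have e4 : (h.roots.map (eval z ∘ fun r => 1 - C ((starRingEnd ℂ) r) * X)).prod
      = (h.roots.map fun r => (1 : ℂ) - (starRingEnd ℂ) r * z).prod := by
    apply congrArg
    apply Multiset.map_congr rfl
    intro r _
    simp
  rw [e4, e3]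
  ring

lemma norm_mprod (M : Multiset ℂ) : ‖M.prod‖ = (M.map fun x => ‖x‖).prod := by
  induction M using Multiset.induction with
  | empty => simp
  | cons x s ih => simp [norm_mul, ih]

/-- If all zeros of `h`, of degree `n`, lie in the closed unit disk, then for any `d ≥ n`
and unimodular `λ`, the polynomial `z^(d-n) h(z) + λ · (z^n conj(h)(1/z))` has all its
zeros on the unit circle, provided it is not identically zero. -/
theorem selfInversive_zeros_on_unit_circle (n d : ℕ) (h : Polynomial ℂ)
    (hdeg : h.natDegree = n) (hzeros : ∀ z : ℂ, h.eval z = 0 → ‖z‖ ≤ 1)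
    (hd : n ≤ d) (lam : ℂ) (hlam : ‖lam‖ = 1)
    (P : Polynomial ℂ) (hP : P = X ^ (d - n) * h + Polynomial.C lam * conjReciprocal n h)
    (hP0 : P ≠ 0) :
    ∀ z : ℂ, P.eval z = 0 → ‖z‖ = 1 := by
  intro z hzev
  have hh0 : h ≠ 0 := by
    rintro rfl
    apply hP0
    rw [hP]
    simp [conjReciprocal]
  have ha : h.leadingCoeff ≠ 0 := leadingCoeff_ne_zero.mpr hh0
  set a := h.leadingCoeff with ha_def
  have hsplit : Splits h := IsAlgClosed.splits h
  have hcard : Multiset.card h.roots = n := (splits_iff_card_roots.mp hsplit).trans hdeg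
  have hfact : C a * (h.roots.map fun r => X - C r).prod = h :=
    C_leadingCoeff_mul_prod_multiset_X_sub_C (splits_iff_card_roots.mp hsplit)
  have hcr := conjReciprocal_eq h n hdeg
  have hevalh : ∀ w : ℂ, h.eval w = a * (h.roots.map fun r => w - r).prod := by
    intro w
    conv_lhs => rw [← hfact]
    rw [eval_mul, eval_C, eval_multiset_prod, Multiset.map_map]
    congr 2
    apply Multiset.map_congr rfl
    intro r _
    simp
  have hevalc : ∀ w : ℂ, (conjReciprocal n h).eval w
      = (starRingEnd ℂ) a * (h.roots.map fun r => 1 - (starRingEnd ℂ) r * w).prod := by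
    intro w
    rw [hcr, eval_mul, eval_C, eval_multiset_prod, Multiset.map_map]
    congr 2
    apply Multiset.map_congr rfl
    intro r _
    simp
  have hrle : ∀ r ∈ h.roots, ‖r‖ ≤ 1 := by
    intro r hr
    exact hzeros r ((mem_roots hh0).mp hr)
  have hnormh : ∀ w : ℂ, ‖h.eval w‖ = ‖a‖ * (h.roots.map fun r => ‖w - r‖).prod := by
    intro w
    rw [hevalh w, norm_mul, norm_mprod, Multiset.map_map]
    rfl
  have hnormc : ∀ w : ℂ, ‖(conjReciprocal n h).eval w‖
      = ‖a‖ * (h.roots.map fun r => ‖1 - (starRingEnd ℂ) r * w‖).prod := by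
    intro w
    rw [hevalc w, norm_mul, norm_mprod, Multiset.map_map, RCLike.norm_conj]
    rfl
  by_cases hall : ∀ r ∈ h.roots, ‖r‖ = 1
  · -- Case B: all roots on the unit circle
    set μ : ℂ := (starRingEnd ℂ) a / a * (h.roots.map fun r => -((starRingEnd ℂ) r)).prod
      with hμdef
    have hevalP : ∀ w : ℂ, P.eval w = (w ^ (d - n) + lam * μ) * h.eval w := by
      intro w
      rw [hP]
      simp only [eval_add, eval_mul, eval_pow, eval_X, eval_C]
      rw [hevalc w, hevalh w]
      have hB : (h.roots.map fun r => 1 - (starRingEnd ℂ) r * w).prod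
          = (h.roots.map fun r => -((starRingEnd ℂ) r)).prod
            * (h.roots.map fun r => w - r).prod := by
        rw [← Multiset.prod_map_mul]
        apply congrArg
        apply Multiset.map_congr rfl
        intro r hr
        have hnsq : Complex.normSq r = 1 := by
          have h3 := hall r hr
          have h4 : ‖r‖ ^ 2 = Complex.normSq r := by rw [Complex.sq_norm]
          nlinarith
        have hr1 : (starRingEnd ℂ) r * r = 1 := by
          rw [mul_comm, Complex.mul_conj, hnsq]
          simp
        linear_combination -hr1
      rw [hB, hμdef]
      field_simp
    have hμ1 : ‖μ‖ = 1 := by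
      rw [hμdef, norm_mul, norm_div, RCLike.norm_conj, div_self (norm_ne_zero_iff.mpr ha),
        one_mul, norm_mprod, Multiset.map_map]
      apply Multiset.prod_eq_one
      intro x hx
      obtain ⟨r, hr, rfl⟩ := Multiset.mem_map.mp hx
      simp only [Function.comp_apply, norm_neg, RCLike.norm_conj]
      exact hall r hr
    have hmul : (z ^ (d - n) + lam * μ) * h.eval z = 0 := by
      rw [← hevalP z]
      exact hzev
    rcases mul_eq_zero.mp hmul with hcase | hcase
    · rcases Nat.lt_or_ge n d with hlt | hge
      · have hpow1 : ‖z‖ ^ (d - n) = 1 := by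
          have h4 : z ^ (d - n) = -(lam * μ) := by linear_combination hcase
          calc ‖z‖ ^ (d - n) = ‖z ^ (d - n)‖ := (norm_pow z _).symm
            _ = ‖lam * μ‖ := by rw [h4, norm_neg]
            _ = 1 := by rw [norm_mul, hlam, hμ1, one_mul]
        have hk : d - n ≠ 0 := Nat.sub_ne_zero_of_lt hlt
        rcases lt_trichotomy ‖z‖ 1 with h1 | h1 | h1
        · have := pow_lt_one₀ (norm_nonneg z) h1 hk
          linarith
        · exact h1
        · have := one_lt_pow₀ h1 hk
          linarith
      · exfalso
        apply hP0
        have hdn : d - n = 0 := Nat.sub_eq_zero_of_le hge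
        have hz1 : (1 : ℂ) + lam * μ = 0 := by
          rw [hdn] at hcase
          simpa using hcase
        apply Polynomial.funext
        intro x
        rw [hevalP x, hdn, pow_zero, hz1, zero_mul]
        simp
    · have hzr : z ∈ h.roots := (mem_roots hh0).mpr hcase
      exact hall z hzr
  · -- Case A: some root strictly inside the disk
    push_neg at hall
    obtain ⟨r₀, hr₀mem, hr₀⟩ := hall
    have hr₀lt : ‖r₀‖ < 1 := lt_of_le_of_ne (hrle r₀ hr₀mem) hr₀
    have heq : ‖z‖ ^ (d - n) * ‖h.eval z‖ = ‖(conjReciprocal n h).eval z‖ := by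
      have h5 : z ^ (d - n) * h.eval z = -(lam * (conjReciprocal n h).eval z) := by
        have h6 := hzev
        rw [hP] at h6
        simp only [eval_add, eval_mul, eval_pow, eval_X, eval_C] at h6
        linear_combination h6
      calc ‖z‖ ^ (d - n) * ‖h.eval z‖ = ‖z ^ (d - n) * h.eval z‖ := by
            rw [norm_mul, norm_pow]
        _ = ‖lam * (conjReciprocal n h).eval z‖ := by rw [h5, norm_neg]
        _ = ‖(conjReciprocal n h).eval z‖ := by rw [norm_mul, hlam, one_mul]
    have hapos : 0 < ‖a‖ := norm_pos_iff.mpr ha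
    rcases lt_trichotomy ‖z‖ 1 with h1 | h1 | h1
    · exfalso
      have hlt : ‖h.eval z‖ < ‖(conjReciprocal n h).eval z‖ := by
        rw [hnormh z, hnormc z]
        apply mul_lt_mul_of_pos_left ?_ hapos
        apply prod_lt_prod_of_mem _ _ _ ?_ ?_ ?_ r₀ hr₀mem
        · exact norm_lt_inside h1 hr₀lt
        · intro r hr
          exact norm_nonneg _
        · intro r hr
          exact norm_le_inside h1.le (hrle r hr)
        · intro r hr
          exact pos_inside h1 (hrle r hr)
      have hle1 : ‖z‖ ^ (d - n) * ‖h.eval z‖ ≤ ‖h.eval z‖ :=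
        mul_le_of_le_one_left (norm_nonneg _) (pow_le_one₀ (norm_nonneg z) h1.le)
      linarith
    · exact h1
    · exfalso
      have hlt : ‖(conjReciprocal n h).eval z‖ < ‖h.eval z‖ := by
        rw [hnormh z, hnormc z]
        apply mul_lt_mul_of_pos_left ?_ hapos
        apply prod_lt_prod_of_mem _ _ _ ?_ ?_ ?_ r₀ hr₀mem
        · exact norm_lt_outside h1 hr₀lt
        · intro r hr
          exact norm_nonneg _
        · intro r hr
          exact norm_le_outside h1.le (hrle r hr)
        · intro r hr
          exact pos_outside h1 (hrle r hr)
      have hge1 : ‖h.eval z‖ ≤ ‖z‖ ^ (d - n) * ‖h.eval z‖ :=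
        le_mul_of_one_le_left (norm_nonneg _) (one_le_pow₀ h1.le)
      linarith
end

section
/- Let P(z) = Σ_{j=0}^{n} a_j z^j be a polynomial with real coefficients satisfying 0 < a_0 ≤ a_1 ≤ ⋯ ≤ a_n. Then every complex zero z of P satisfies |z| ≤ 1. (Eneström–Kakeya theorem.) -/
open Polynomial

/-- Eneström–Kakeya theorem: if `P(z) = ∑_{j=0}^{n} a_j z^j` has real coefficients with
`0 < a_0 ≤ a_1 ≤ ⋯ ≤ a_n`, then every complex zero of `P` lies in the closed unit disk. -/
theorem enestrom_kakeya (n : ℕ) (a : ℕ → ℝ) (ha0 : 0 < a 0)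
    (hmono : ∀ i j, i ≤ j → j ≤ n → a i ≤ a j)
    (P : Polynomial ℂ)
    (hP : P = ∑ j ∈ Finset.range (n + 1), Polynomial.C ((a j : ℂ)) * X ^ j) :
    ∀ z : ℂ, P.eval z = 0 → ‖z‖ ≤ 1 := by
  intro z hz
  by_contra hlt
  push_neg at hlt
  have hz1 : (1:ℝ) < ‖z‖ := hlt
  have hzpos : 0 < ‖z‖ := lt_trans one_pos hz1
  have han : 0 < a n := lt_of_lt_of_le ha0 (hmono 0 n (Nat.zero_le n) le_rfl)
  -- the evaluated sum is zero
  have hS : ∑ j ∈ Finset.range (n + 1), (a j : ℂ) * z ^ j = 0 := by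
    rw [hP] at hz
    simpa [Polynomial.eval_finset_sum] using hz
  -- key telescoping identity
  have h1 : ∑ j ∈ Finset.range n, ((a (j+1) : ℂ)) * z ^ (j+1)
      = (∑ j ∈ Finset.range (n+1), (a j : ℂ) * z ^ j) - (a 0 : ℂ) := by
    rw [eq_sub_iff_add_eq]
    simpa using (Finset.sum_range_succ' (fun j => (a j : ℂ) * z ^ j) n).symm
  have h2 : ∑ j ∈ Finset.range n, ((a j : ℂ)) * z ^ (j+1)
      = (∑ j ∈ Finset.range (n+1), (a j : ℂ) * z ^ (j+1)) - (a n : ℂ) * z ^ (n+1) := by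
    rw [Finset.sum_range_succ]; ring
  have h3 : ∑ j ∈ Finset.range (n+1), (a j : ℂ) * z ^ (j+1)
      = z * ∑ j ∈ Finset.range (n+1), (a j : ℂ) * z ^ j := by
    rw [Finset.mul_sum]; apply Finset.sum_congr rfl; intros; ring
  have key : (a n : ℂ) * z ^ (n + 1)
      = (a 0 : ℂ) + ∑ j ∈ Finset.range n, ((a (j+1) - a j : ℝ) : ℂ) * z ^ (j+1) := by
    have hsplit : ∑ j ∈ Finset.range n, ((a (j+1) - a j : ℝ) : ℂ) * z ^ (j+1)
        = (∑ j ∈ Finset.range n, (a (j+1) : ℂ) * z ^ (j+1))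
          - ∑ j ∈ Finset.range n, (a j : ℂ) * z ^ (j+1) := by
      rw [← Finset.sum_sub_distrib]
      apply Finset.sum_congr rfl; intros; push_cast; ring
    rw [hsplit, h1, h2, h3, hS]
    ring
  set r := ‖z‖ with hr
  -- norm bound from the triangle inequality
  have hnorm : a n * r ^ (n+1) ≤ a 0 + ∑ j ∈ Finset.range n, (a (j+1) - a j) * r ^ (j+1) := by
    have e1 : a n * r ^ (n+1) = ‖(a n : ℂ) * z ^ (n+1)‖ := by
      rw [norm_mul, norm_pow, Complex.norm_real, Real.norm_eq_abs, abs_of_pos han]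
    rw [e1, key]
    calc ‖(a 0 : ℂ) + ∑ j ∈ Finset.range n, ((a (j+1) - a j : ℝ) : ℂ) * z ^ (j+1)‖
        ≤ ‖(a 0 : ℂ)‖ + ‖∑ j ∈ Finset.range n, ((a (j+1) - a j : ℝ) : ℂ) * z ^ (j+1)‖ :=
          norm_add_le _ _
      _ ≤ ‖(a 0 : ℂ)‖ + ∑ j ∈ Finset.range n, ‖((a (j+1) - a j : ℝ) : ℂ) * z ^ (j+1)‖ := by
          gcongr
          exact norm_sum_le _ _
      _ = a 0 + ∑ j ∈ Finset.range n, (a (j+1) - a j) * r ^ (j+1) := by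
          rw [Complex.norm_real, Real.norm_eq_abs, abs_of_pos ha0]
          congr 1
          apply Finset.sum_congr rfl
          intro j hj
          rw [norm_mul, norm_pow, Complex.norm_real, Real.norm_eq_abs, abs_of_nonneg]
          have hjn : j + 1 ≤ n := Finset.mem_range.mp hj
          exact sub_nonneg.mpr (hmono j (j+1) (Nat.le_succ j) hjn)
  have hr1 : (1:ℝ) ≤ r := le_of_lt hz1
  have hbound : a 0 + ∑ j ∈ Finset.range n, (a (j+1) - a j) * r ^ (j+1) ≤ a n * r ^ n := by
    have step : ∑ j ∈ Finset.range n, (a (j+1) - a j) * r ^ (j+1)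
        ≤ ∑ j ∈ Finset.range n, (a (j+1) - a j) * r ^ n := by
      apply Finset.sum_le_sum
      intro j hj
      have hjn : j + 1 ≤ n := Finset.mem_range.mp hj
      have hnn : 0 ≤ a (j+1) - a j := sub_nonneg.mpr (hmono j (j+1) (Nat.le_succ j) hjn)
      exact mul_le_mul_of_nonneg_left (pow_le_pow_right₀ hr1 hjn) hnn
    have ha0r : a 0 ≤ a 0 * r ^ n :=
      le_mul_of_one_le_right ha0.le (one_le_pow₀ hr1)
    have tele : a 0 * r ^ n + ∑ j ∈ Finset.range n, (a (j+1) - a j) * r ^ n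
        = a n * r ^ n := by
      rw [← Finset.sum_mul, Finset.sum_range_sub (fun i => a i)]
      ring
    linarith [step, ha0r, tele]
  have hpow : r ^ n < r ^ (n+1) := pow_lt_pow_right₀ hz1 (Nat.lt_succ_self n)
  have : a n * r ^ n < a n * r ^ (n+1) := by
    exact mul_lt_mul_of_pos_left hpow han
  linarith
end

section
/- Let f be a continuous function on the positive imaginary axis with f(iv) = O(e^{-cv}) as v → ∞ for some c > 0, and suppose f satisfies f(-1/τ) = τ^k f(τ) for τ = iv, v > 0, with k an even positive integer. Define Λ_f(s) = ∫_0^∞ f(iv) v^{s-1} dv. Then Λ_f(s) converges for all s ∈ ℂ and satisfies the functional equation Λ_f(s) = i^k Λ_f(k − s). -/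
open Complex MeasureTheory Set Filter Topology

open Complex MeasureTheory Set Filter Topology

lemma exp_le_rpow_eventually {c : ℝ} (hc : 0 < c) (a : ℝ) :
    ∀ᶠ x : ℝ in atTop, Real.exp (-c * x) ≤ x ^ (-a) := by
  filter_upwards [(tendsto_rpow_mul_exp_neg_mul_atTop_nhds_zero a c hc).eventually_lt_const
    zero_lt_one, eventually_ge_atTop (1:ℝ)] with x hx hx1
  have hx0 : (0:ℝ) < x := lt_of_lt_of_le zero_lt_one hx1
  have hxa : (0:ℝ) < x ^ a := Real.rpow_pos_of_pos hx0 a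
  have h1 : x ^ a * (x ^ a)⁻¹ = 1 := mul_inv_cancel₀ hxa.ne'
  rw [Real.rpow_neg hx0.le]
  nlinarith [Real.exp_pos (-c * x)]

/-- For a cusp-form-like function `f` (continuous on the positive imaginary axis, with
exponential decay at `i∞` and satisfying `f(-1/τ) = τ^k f(τ)` on the imaginary axis),
the Mellin transform `Λ_f(s) = ∫_0^∞ f(iv) v^{s-1} dv` converges for every `s ∈ ℂ` and
satisfies `Λ_f(s) = i^k Λ_f(k-s)`. -/
theorem mellin_functional_equation (f : ℂ → ℂ) (k : ℕ) (hk : 0 < k) (hke : Even k)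
    (hcont : ContinuousOn (fun v : ℝ => f (v * I)) (Ioi 0))
    (hdecay : ∃ c > (0:ℝ), ∃ C : ℝ, ∀ v : ℝ, 1 ≤ v → ‖f (v * I)‖ ≤ C * Real.exp (-c * v))
    (hmod : ∀ v : ℝ, 0 < v → f (-1 / (v * I)) = (v * I) ^ k * f (v * I)) :
    (∀ s : ℂ, IntegrableOn (fun v : ℝ => f (v * I) * (v : ℂ) ^ (s - 1)) (Ioi 0)) ∧
    (∀ s : ℂ,
      ∫ v in Ioi (0:ℝ), f (v * I) * (v : ℂ) ^ (s - 1) =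
        I ^ k * ∫ v in Ioi (0:ℝ), f (v * I) * (v : ℂ) ^ ((k : ℂ) - s - 1)) := by

  set g : ℝ → ℂ := fun v : ℝ => f (v * I) with hg
  obtain ⟨c, hc, C, hC⟩ := hdecay
  have hC0 : 0 ≤ C := by
    have h1 := hC 1 le_rfl
    have h2 := norm_nonneg (f ((1:ℝ) * I))
    nlinarith [Real.exp_pos (-c * 1)]
  -- the modular relation, restated for `g`
  have hrel : ∀ v : ℝ, 0 < v → g v⁻¹ = ((v:ℂ) * I) ^ k * g v := by
    intro v hv
    have key : -1 / ((v:ℂ) * I) = ((v⁻¹ : ℝ) : ℂ) * I := by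
      have h : (v:ℂ) ≠ 0 := ofReal_ne_zero.2 hv.ne'
      push_cast
      field_simp
      rw [sq, I_mul_I]
    have := hmod v hv
    rw [key] at this
    exact this
  -- local integrability
  have hloc : LocallyIntegrableOn g (Ioi 0) := hcont.locallyIntegrableOn measurableSet_Ioi
  -- big-O at infinity, any power
  have htop : ∀ a : ℝ, g =O[atTop] (· ^ (-a)) := by
    intro a
    apply Asymptotics.IsBigO.of_bound C
    filter_upwards [exp_le_rpow_eventually hc a, eventually_ge_atTop (1:ℝ)] with x hx hx1
    have hx0 : (0:ℝ) < x := lt_of_lt_of_le zero_lt_one hx1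
    have h1 : ‖g x‖ ≤ C * Real.exp (-c * x) := hC x hx1
    have h2 : C * Real.exp (-c * x) ≤ C * x ^ (-a) := by
      exact mul_le_mul_of_nonneg_left hx hC0
    rw [Real.norm_eq_abs, abs_of_pos (Real.rpow_pos_of_pos hx0 _)]
    linarith
  -- big-O at 0, any power
  have hbot : ∀ b : ℝ, g =O[𝓝[>] (0:ℝ)] (· ^ (-b)) := by
    intro b
    apply Asymptotics.IsBigO.of_bound C
    filter_upwards [tendsto_inv_nhdsGT_zero.eventually
        (exp_le_rpow_eventually hc ((k : ℝ) - b)),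
      tendsto_inv_nhdsGT_zero.eventually (eventually_ge_atTop (1:ℝ)),
      self_mem_nhdsWithin] with v hv hv1 hv0
    simp only [mem_Ioi] at hv0
    have hvi : (0:ℝ) < v⁻¹ := inv_pos.2 hv0
    have h1 : ‖g v⁻¹‖ ≤ C * Real.exp (-c * v⁻¹) := hC v⁻¹ hv1
    have h2 : g v⁻¹ = ((v:ℂ) * I) ^ k * g v := hrel v hv0
    have h3 : ‖g v⁻¹‖ = v ^ k * ‖g v‖ := by
      rw [h2, norm_mul, norm_pow, norm_mul, Complex.norm_I, mul_one,
        Complex.norm_real, Real.norm_eq_abs, abs_of_pos hv0]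
    have h4 : (v⁻¹) ^ (-((k:ℝ) - b)) = v ^ ((k:ℝ) - b) := by
      rw [Real.inv_rpow hv0.le, ← Real.rpow_neg hv0.le, neg_neg]
    have h5 : v ^ k * (v ^ ((k:ℝ) - b))⁻¹ = (v ^ (-b))⁻¹ ∨ True := Or.inr trivial
    have h6 : (v:ℝ) ^ k * v ^ (-b) = v ^ ((k:ℝ) - b) := by
      rw [← Real.rpow_natCast v k, ← Real.rpow_add hv0]
      ring_nf
    -- ‖g v‖ = v^(-k) ‖g v⁻¹‖ ≤ v^(-k) C exp(-c/v) ≤ v^(-k) C v^(k-b) = C v^(-b)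
    have hvk : (0:ℝ) < v ^ k := pow_pos hv0 k
    rw [Real.norm_eq_abs, abs_of_pos (Real.rpow_pos_of_pos hv0 _)]
    have h7 : v ^ k * ‖g v‖ ≤ C * v ^ ((k:ℝ) - b) := by
      calc v ^ k * ‖g v‖ = ‖g v⁻¹‖ := h3.symm
        _ ≤ C * Real.exp (-c * v⁻¹) := h1
        _ ≤ C * v ^ ((k:ℝ) - b) := by
            refine mul_le_mul_of_nonneg_left ?_ hC0
            rw [← h4]; exact hv
    calc ‖g v‖ = (v ^ k)⁻¹ * (v ^ k * ‖g v‖) := by field_simp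
      _ ≤ (v ^ k)⁻¹ * (C * v ^ ((k:ℝ) - b)) := by
          exact mul_le_mul_of_nonneg_left h7 (inv_nonneg.2 hvk.le)
      _ = C * v ^ (-b) := by
          rw [← h6]; field_simp
  -- convergence for every s
  have hconv : ∀ s : ℂ, MellinConvergent g s := fun s =>
    mellinConvergent_of_isBigO_rpow hloc (htop (s.re + 1)) (by linarith)
      (hbot (s.re - 1)) (by linarith)
  have heqfun : ∀ s : ℂ, (fun v : ℝ => f (v * I) * (v : ℂ) ^ (s - 1)) =
      fun v : ℝ => (v : ℂ) ^ (s - 1) • g v := by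
    intro s; funext v; simp [hg, smul_eq_mul, mul_comm]
  have hmelint : ∀ s : ℂ, (∫ v in Ioi (0:ℝ), f (v * I) * (v : ℂ) ^ (s - 1)) = mellin g s := by
    intro s; rw [mellin]; congr 1; exact heqfun s
  refine ⟨fun s => ?_, fun s => ?_⟩
  · rw [heqfun s]; exact hconv s
  · have e2 : (∫ v in Ioi (0:ℝ), f (v * I) * (v : ℂ) ^ ((k:ℂ) - s - 1)) =
        mellin g ((k:ℂ) - s) := by
      have := hmelint ((k:ℂ) - s)
      simpa using this
    rw [hmelint s, e2]
    have h0 := mellin_comp_inv g (-s)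
    rw [neg_neg] at h0
    have h1 : mellin (fun t => g t⁻¹) (-s) = I ^ k * mellin g ((k:ℂ) - s) := by
      rw [mellin, mellin, ← smul_eq_mul, ← integral_smul]
      refine setIntegral_congr_fun measurableSet_Ioi fun t ht => ?_
      have ht0 : (t : ℂ) ≠ 0 := ofReal_ne_zero.2 (ne_of_gt ht)
      have hpow : ((t:ℂ)) ^ ((k:ℂ) - s - 1) = (t:ℂ) ^ (-s - 1) * (t:ℂ) ^ k := by
        rw [show (k:ℂ) - s - 1 = (-s - 1) + (k:ℂ) from by ring, cpow_add _ _ ht0, cpow_natCast]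
      simp only [smul_eq_mul, hrel t ht, mul_pow, hpow]
      ring
    rw [← h0, h1]
end

section
/- Let f(τ) = Σ_{n=0}^∞ a_n e^{2πinτ} be a modular form of even weight k for SL₂(ℤ), and Λ_f(s) = (2π)^{-s} Γ(s) L_f(s) its completed L-function, where L_f(s) = Σ_{n≥1} a_n n^{-s}. Then for Re(s) in a vertical strip where both sides are defined, Λ_f(s) = ∫_1^∞ (f(iv) − a_0) v^{s-1} dv + i^k ∫_1^∞ (f(iv) − a_0) v^{k-s-1} dv − a_0/s − a_0 i^k/(k − s). -/
open Complex MeasureTheory Set Real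

open Filter Asymptotics in
private lemma aux_bound (k : ℕ) (a : ℕ → ℂ)
    (h : Summable (fun n : ℕ => a (n + 1) * ((n + 1 : ℕ) : ℂ) ^ (-((k:ℂ)+1)))) :
    ∃ C : ℝ, 0 ≤ C ∧ ∀ n : ℕ, ‖a n‖ ≤ C * ((n:ℝ)+1) ^ (k+1) := by
  have hn : Summable (fun n : ℕ => ‖a (n + 1) * ((n + 1 : ℕ) : ℂ) ^ (-((k:ℂ)+1))‖) := h.norm
  set T := ∑' n, ‖a (n + 1) * ((n + 1 : ℕ) : ℂ) ^ (-((k:ℂ)+1))‖ with hT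
  have hT0 : 0 ≤ T := tsum_nonneg fun _ => norm_nonneg _
  refine ⟨T + ‖a 0‖, by positivity, fun n => ?_⟩
  match n with
  | 0 =>
    have h1 : ((↑(0:ℕ):ℝ)+1)^(k+1) = 1 := by norm_num
    rw [h1]
    nlinarith [norm_nonneg (a 0)]
  | (m+1) =>
    have hle : ‖a (m + 1) * ((m + 1 : ℕ) : ℂ) ^ (-((k:ℂ)+1))‖ ≤ T :=
      hn.le_tsum m (fun _ _ => norm_nonneg _)
    have hpos : (0:ℝ) < ((m:ℝ)+1) := by positivity
    have hnorm : ‖((m + 1 : ℕ) : ℂ) ^ (-((k:ℂ)+1))‖ = ((m:ℝ)+1) ^ (-((k:ℝ)+1)) := by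
      rw [show ((m + 1 : ℕ) : ℂ) = (((m:ℝ)+1 : ℝ) : ℂ) by push_cast; ring]
      rw [Complex.norm_cpow_eq_rpow_re_of_pos hpos]
      norm_num
    rw [norm_mul, hnorm] at hle
    have hrw : ((m:ℝ)+1) ^ (-((k:ℝ)+1)) = (((m:ℝ)+1) ^ (k+1))⁻¹ := by
      rw [← Real.rpow_natCast (((m:ℝ)+1)) (k+1), ← Real.rpow_neg hpos.le]
      push_cast; ring_nf
    have hppos : (0:ℝ) < ((m:ℝ)+1) ^ (k+1) := by positivity
    have : ‖a (m+1)‖ ≤ T * ((m:ℝ)+1) ^ (k+1) := by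
      rw [hrw] at hle
      calc ‖a (m+1)‖ = ‖a (m+1)‖ * (((m:ℝ)+1)^(k+1))⁻¹ * ((m:ℝ)+1)^(k+1) := by
            field_simp
        _ ≤ T * ((m:ℝ)+1)^(k+1) := by
            apply mul_le_mul_of_nonneg_right hle hppos.le
    have hmono : ((m:ℝ)+1)^(k+1) ≤ ((m:ℝ)+1+1)^(k+1) := by
      apply pow_le_pow_left₀ (by positivity) (by linarith)
    have h1 : (0:ℝ) ≤ ‖a 0‖ * ((m:ℝ)+1+1)^(k+1) := by positivity
    push_cast
    nlinarith

private lemma aux_summable (k : ℕ) (a : ℕ → ℂ)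
    (C : ℝ) (hC : ∀ n : ℕ, ‖a n‖ ≤ C * ((n:ℝ)+1) ^ (k+1)) {t : ℝ} (ht : 0 < t) :
    Summable (fun n : ℕ => ‖a n‖ * Real.exp (-(2*π*n) * t)) := by
  set r : ℝ := Real.exp (-(2*π*t)) with hr
  have hr0 : 0 < r := Real.exp_pos _
  have hr1 : r < 1 := by
    rw [hr, Real.exp_lt_one_iff]
    have := Real.pi_pos
    nlinarith
  have hgeo : Summable (fun n : ℕ => ((n:ℝ))^(k+1) * r^n) :=
    summable_pow_mul_geometric_of_norm_lt_one (k+1) (by rwa [Real.norm_eq_abs, abs_of_pos hr0])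
  have hsh : Summable (fun n : ℕ => ((n:ℝ)+1)^(k+1) * r^(n+1)) := by
    have := (summable_nat_add_iff 1).mpr hgeo
    simpa [Nat.cast_add] using this
  have hsh' : Summable (fun n : ℕ => C * (((n:ℝ)+1)^(k+1) * r^(n+1)) * r⁻¹) :=
    (hsh.mul_left C).mul_right r⁻¹
  refine hsh'.of_nonneg_of_le (fun n => by positivity) (fun n => ?_)
  have hexp : Real.exp (-(2*π*n) * t) = r^n := by
    rw [hr, ← Real.exp_nat_mul]
    ring_nf
  rw [hexp]
  have h2 : C * (((n:ℝ)+1)^(k+1) * r^(n+1)) * r⁻¹ = C * ((n:ℝ)+1)^(k+1) * r^n := by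
    rw [pow_succ]
    field_simp
    ring
  rw [h2]
  exact mul_le_mul_of_nonneg_right (hC n) (by positivity)

private lemma aux_arg (n : ℕ) (t : ℝ) : (2*(π:ℂ)*I*(n:ℂ)*((t:ℂ)*I)) = ((-(2*π*n*t):ℝ):ℂ) := by
  push_cast
  ring_nf
  rw [Complex.I_sq]
  ring

private lemma aux_hasSum (k : ℕ) (f : ℂ → ℂ) (a : ℕ → ℂ)
    (hf : ∀ τ : ℂ, 0 < τ.im → f τ = ∑' n : ℕ, a n * Complex.exp (2 * π * I * n * τ))
    (C : ℝ) (hC : ∀ n : ℕ, ‖a n‖ ≤ C * ((n:ℝ)+1) ^ (k+1)) {t : ℝ} (ht : 0 < t) :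
    HasSum (fun n : ℕ => a (n+1) * (Real.exp (-(2*π*((n:ℝ)+1)) * t) : ℂ))
      (f (t * I) - a 0) := by
  have hterm : ∀ n : ℕ, a n * Complex.exp (2 * π * I * n * ((t:ℂ) * I)) =
      a n * (Real.exp (-(2*π*n) * t) : ℂ) := by
    intro n
    rw [aux_arg n t]
    congr 2
    push_cast
    ring
  have hS : Summable (fun n : ℕ => a n * (Real.exp (-(2*π*(n:ℝ)) * t) : ℂ)) := by
    apply Summable.of_norm
    have := aux_summable k a C hC ht
    refine this.congr fun n => ?_
    rw [norm_mul, Complex.norm_real, Real.norm_eq_abs, abs_of_pos (Real.exp_pos _)]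
  have hfull : HasSum (fun n : ℕ => a n * (Real.exp (-(2*π*(n:ℝ)) * t) : ℂ)) (f ((t:ℂ) * I)) := by
    have h1 := hS.hasSum
    have h2 : f ((t:ℂ) * I) = ∑' n : ℕ, a n * (Real.exp (-(2*π*(n:ℝ)) * t) : ℂ) := by
      rw [hf ((t:ℂ) * I) (by simp [ht])]
      exact tsum_congr hterm
    rwa [← h2] at h1
  have hshift := (hasSum_nat_add_iff' (f := fun n : ℕ => a n * (Real.exp (-(2*π*(n:ℝ)) * t) : ℂ))
    1).mpr hfull
  simp only [Finset.range_one, Finset.sum_singleton, Nat.cast_zero] at hshift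
  have : a 0 * ((Real.exp (-(2*π*(0:ℝ)) * t) : ℝ) : ℂ) = a 0 := by
    norm_num
  rw [this] at hshift
  refine hshift.congr_fun fun n => ?_
  push_cast
  ring_nf

private lemma aux_mellin (k : ℕ) (hk : 0 < k) (f : ℂ → ℂ) (a : ℕ → ℂ)
    (hsum : ∀ s : ℂ, (k : ℝ) < s.re →
      Summable (fun n : ℕ => a (n + 1) * ((n + 1 : ℕ) : ℂ) ^ (-s)))
    (hH : ∀ t : ℝ, 0 < t →
      HasSum (fun n : ℕ => a (n+1) * (Real.exp (-(2*π*((n:ℝ)+1)) * t) : ℂ))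
        (f (t * I) - a 0))
    {s : ℂ} (hs : (k : ℝ) < s.re) :
    mellin (fun t : ℝ => f (t * I) - a 0) s =
      ((2 * π : ℂ) ^ (-s)) * Complex.Gamma s *
        (∑' n : ℕ, a (n + 1) * ((n + 1 : ℕ) : ℂ) ^ (-s)) := by
  have hs0 : 0 < s.re := lt_of_le_of_lt (by positivity) hs
  have hp : ∀ n : ℕ, a (n+1) = 0 ∨ 0 < 2*π*((n:ℝ)+1) := fun n => Or.inr (by positivity)
  have h_sum : Summable fun n : ℕ => ‖a (n+1)‖ / (2*π*((n:ℝ)+1)) ^ s.re := by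
    have h1 := (hsum (s.re : ℂ) (by simpa using hs)).norm
    have h2 : Summable fun n : ℕ =>
        (2*π) ^ (-s.re) * ‖a (n+1) * ((n + 1 : ℕ) : ℂ) ^ (-(s.re:ℂ))‖ :=
      h1.mul_left _
    refine h2.congr fun n => ?_
    have hpos : (0:ℝ) < ((n:ℝ)+1) := by positivity
    have hnorm : ‖((n + 1 : ℕ) : ℂ) ^ (-(s.re:ℂ))‖ = ((n:ℝ)+1) ^ (-s.re) := by
      rw [show ((n + 1 : ℕ) : ℂ) = (((n:ℝ)+1 : ℝ) : ℂ) by push_cast; ring]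
      rw [Complex.norm_cpow_eq_rpow_re_of_pos hpos]
      simp
    rw [norm_mul, hnorm, Real.mul_rpow (by positivity) hpos.le,
      Real.rpow_neg (by positivity : (0:ℝ) ≤ 2*π), Real.rpow_neg hpos.le]
    field_simp
  have hMel := hasSum_mellin (F := fun t : ℝ => f (t * I) - a 0)
    (a := fun n : ℕ => a (n+1)) (p := fun n : ℕ => 2*π*((n:ℝ)+1)) hp hs0
    (fun t ht => by simpa using hH t ht) h_sum
  have hL := ((hsum s hs).hasSum.mul_left (((2 * π : ℂ) ^ (-s)) * Complex.Gamma s))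
  have : ∀ n : ℕ, ((2 * π : ℂ) ^ (-s)) * Complex.Gamma s * (a (n + 1) * ((n + 1 : ℕ) : ℂ) ^ (-s)) =
      Complex.Gamma s * a (n+1) / ((2*π*((n:ℝ)+1) : ℝ) : ℂ) ^ s := by
    intro n
    have h2π : (0:ℝ) ≤ 2*π := by positivity
    have hpos : (0:ℝ) ≤ ((n:ℝ)+1) := by positivity
    rw [show ((2*π*((n:ℝ)+1) : ℝ) : ℂ) = ((2*π:ℝ):ℂ) * (((n:ℝ)+1:ℝ):ℂ) by push_cast; ring]
    rw [mul_cpow_ofReal_nonneg h2π hpos]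
    rw [show (((n:ℝ)+1:ℝ):ℂ) = ((n + 1 : ℕ) : ℂ) by push_cast; ring]
    rw [show ((2*π:ℝ):ℂ) = (2*π:ℂ) by push_cast; ring]
    rw [cpow_neg, cpow_neg]
    have hne1 : ((2*π:ℂ)) ^ s ≠ 0 := by
      simp only [Ne, cpow_eq_zero_iff, not_and_or]
      left
      simp only [Ne, mul_eq_zero, not_or]
      exact ⟨two_ne_zero, by exact_mod_cast Real.pi_ne_zero⟩
    have hne2 : ((n + 1 : ℕ) : ℂ) ^ s ≠ 0 := by
      simp only [Ne, cpow_eq_zero_iff, not_and_or]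
      left
      exact Nat.cast_ne_zero.mpr (Nat.succ_ne_zero n)
    field_simp
  have hL' := hL.congr_fun (fun n => (this n).symm)
  exact HasSum.unique hMel hL'

private lemma aux_cont (k : ℕ) (f : ℂ → ℂ) (a : ℕ → ℂ)
    (hf : ∀ τ : ℂ, 0 < τ.im → f τ = ∑' n : ℕ, a n * Complex.exp (2 * π * I * n * τ))
    (C : ℝ) (hC : ∀ n : ℕ, ‖a n‖ ≤ C * ((n:ℝ)+1) ^ (k+1)) :
    ContinuousOn (fun t : ℝ => f (t * I) - a 0) (Ioi (0:ℝ)) := by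
  have key : ∀ t₀ : ℝ, 0 < t₀ →
      ContinuousAt (fun t : ℝ => ∑' n : ℕ, a n * (Real.exp (-(2*π*(n:ℝ)) * t) : ℂ)) t₀ := by
    intro t₀ ht₀
    have h2 : (0:ℝ) < t₀/2 := by linarith
    have hcont : ContinuousOn (fun t : ℝ => ∑' n : ℕ, a n * (Real.exp (-(2*π*(n:ℝ)) * t) : ℂ))
        (Ici (t₀/2)) := by
      apply continuousOn_tsum (u := fun n : ℕ => ‖a n‖ * Real.exp (-(2*π*(n:ℝ)) * (t₀/2)))
      · intro n
        apply Continuous.continuousOn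
        continuity
      · exact aux_summable k a C hC h2
      · intro n t htm
        rw [norm_mul, Complex.norm_real, Real.norm_eq_abs, abs_of_pos (Real.exp_pos _)]
        have : Real.exp (-(2*π*(n:ℝ)) * t) ≤ Real.exp (-(2*π*(n:ℝ)) * (t₀/2)) := by
          apply Real.exp_le_exp.mpr
          have hn : (0:ℝ) ≤ 2*π*(n:ℝ) := by positivity
          nlinarith [mem_Ici.mp htm]
        exact mul_le_mul_of_nonneg_left this (norm_nonneg _)
    exact hcont.continuousAt (Ici_mem_nhds (by linarith))
  apply ContinuousOn.congr (f := fun t : ℝ =>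
      (∑' n : ℕ, a n * (Real.exp (-(2*π*(n:ℝ)) * t) : ℂ)) - a 0)
  · exact ContinuousOn.sub
      (fun t ht => (key t ht).continuousWithinAt) continuousOn_const
  · intro t ht
    have h1 : f ((t:ℂ) * I) = ∑' n : ℕ, a n * (Real.exp (-(2*π*(n:ℝ)) * t) : ℂ) := by
      rw [hf ((t:ℂ) * I) (by simp [mem_Ioi.mp ht])]
      refine tsum_congr fun n => ?_
      have harg : (2*(π:ℂ)*I*(n:ℂ)*((t:ℂ)*I)) = ((-(2*π*n*t):ℝ):ℂ) := by
        push_cast; ring_nf; rw [Complex.I_sq]; ring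
      rw [harg]
      congr 1
      rw [← Complex.ofReal_exp]
      congr 1
      ring
    simp [h1]

open Filter Asymptotics in
private lemma aux_top (f : ℂ → ℂ) (a : ℕ → ℂ)
    {c : ℝ} (hc : 0 < c) {C : ℝ} (hC : ∀ v : ℝ, 1 ≤ v → ‖f (v * I) - a 0‖ ≤ C * Real.exp (-c * v))
    (r : ℝ) :
    (fun v : ℝ => f (v * I) - a 0) =O[atTop] (fun v : ℝ => v ^ (-r)) := by
  have h1 : (fun v : ℝ => f (v * I) - a 0) =O[atTop] (fun v : ℝ => Real.exp (-c * v)) := by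
    apply IsBigO.of_bound C
    filter_upwards [eventually_ge_atTop (1:ℝ)] with v hv
    simpa [abs_of_pos (Real.exp_pos _), Real.norm_eq_abs] using hC v hv
  refine h1.trans ?_
  have h2 : Tendsto (fun v : ℝ => v ^ r * Real.exp (-c * v)) atTop (nhds 0) := by
    simpa using tendsto_rpow_mul_exp_neg_mul_atTop_nhds_zero r c hc
  have h3 : (fun v : ℝ => v ^ r * Real.exp (-c * v)) =O[atTop] (fun _ : ℝ => (1:ℝ)) :=
    h2.isBigO_one ℝ
  have h4 := h3.mul (isBigO_refl (fun v : ℝ => v ^ (-r)) atTop)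
  refine IsBigO.trans ?_ (by simpa using h4)
  apply IsBigO.of_bound 1
  filter_upwards [eventually_gt_atTop (0:ℝ)] with v hv
  have heq : v ^ r * Real.exp (-(c * v)) * v ^ (-r) = Real.exp (-(c*v)) := by
    rw [mul_comm (v ^ r) _, mul_assoc, ← Real.rpow_add hv]
    simp
  rw [heq, one_mul, neg_mul]

private lemma aux_inv (t : ℝ) (ht : t ≠ 0) : (-1 : ℂ) / ((t:ℂ) * I) = ((t⁻¹ : ℝ) : ℂ) * I := by
  have htC : ((t:ℂ)) ≠ 0 := ofReal_ne_zero.mpr ht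
  push_cast
  rw [div_eq_iff (mul_ne_zero htC Complex.I_ne_zero)]
  field_simp
  linear_combination (-1:ℂ) * Complex.I_sq

open Filter Asymptotics in
private lemma aux_zero (k : ℕ) (f : ℂ → ℂ) (a : ℕ → ℂ)
    (hmod : ∀ τ : ℂ, 0 < τ.im → f (-1 / τ) = τ ^ k * f τ)
    {c : ℝ} (hc : 0 < c) {C : ℝ} (hC : ∀ v : ℝ, 1 ≤ v → ‖f (v * I) - a 0‖ ≤ C * Real.exp (-c * v)) :
    (fun t : ℝ => f (t * I) - a 0) =O[nhdsWithin 0 (Ioi (0:ℝ))]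
      (fun t : ℝ => t ^ (-(k:ℝ))) := by
  apply IsBigO.of_bound (2 * ‖a 0‖ + |C|)
  filter_upwards [Ioc_mem_nhdsGT_of_mem (by norm_num : (0:ℝ) ∈ Ico (0:ℝ) 1)] with t ht
  obtain ⟨ht0, ht1⟩ := ht
  have htC : ((t:ℂ)) ≠ 0 := ofReal_ne_zero.mpr ht0.ne'
  have hinv := aux_inv t ht0.ne'
  have hv1 : (1:ℝ) ≤ t⁻¹ := (one_le_inv₀ ht0).mpr ht1
  have hmod' := hmod ((t:ℂ)*I) (by simp [ht0])
  rw [hinv] at hmod'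
  have hkne : (((t:ℂ)*I)^k) ≠ 0 := pow_ne_zero _ (mul_ne_zero htC Complex.I_ne_zero)
  have hfk : f ((t:ℂ)*I) = (((t:ℂ)*I)^k)⁻¹ * f (((t⁻¹:ℝ):ℂ) * I) := by
    rw [hmod']
    field_simp
  have hnormk : ‖(((t:ℂ)*I)^k)⁻¹‖ = (t^k)⁻¹ := by
    rw [norm_inv, norm_pow, norm_mul, Complex.norm_I, mul_one, Complex.norm_real,
      Real.norm_eq_abs, abs_of_pos ht0]
  have hf2 : ‖f (((t⁻¹:ℝ):ℂ) * I)‖ ≤ ‖a 0‖ + |C| := by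
    have h1 := hC t⁻¹ hv1
    have h2 : Real.exp (-c * t⁻¹) ≤ 1 := by
      apply Real.exp_le_one_iff.mpr
      nlinarith
    have h3 : C * Real.exp (-c * t⁻¹) ≤ |C| := by
      calc C * Real.exp (-c * t⁻¹) ≤ |C| * Real.exp (-c * t⁻¹) :=
            mul_le_mul_of_nonneg_right (le_abs_self C) (Real.exp_pos _).le
        _ ≤ |C| * 1 := mul_le_mul_of_nonneg_left h2 (abs_nonneg C)
        _ = |C| := mul_one _
    calc ‖f (((t⁻¹:ℝ):ℂ) * I)‖ ≤ ‖f (((t⁻¹:ℝ):ℂ) * I) - a 0‖ + ‖a 0‖ := by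
          simpa using norm_add_le (f (((t⁻¹:ℝ):ℂ) * I) - a 0) (a 0)
      _ ≤ C * Real.exp (-c * t⁻¹) + ‖a 0‖ := by gcongr
      _ ≤ ‖a 0‖ + |C| := by linarith
  have hrpow : ‖t ^ (-(k:ℝ))‖ = (t^k)⁻¹ := by
    rw [Real.norm_eq_abs, abs_of_pos (Real.rpow_pos_of_pos ht0 _),
      Real.rpow_neg ht0.le, Real.rpow_natCast]
  have hge1 : (1:ℝ) ≤ (t^k)⁻¹ := by
    rw [one_le_inv₀ (by positivity)]
    exact pow_le_one₀ ht0.le ht1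
  have hfn : ‖f ((t:ℂ)*I)‖ ≤ (t^k)⁻¹ * (‖a 0‖ + |C|) := by
    rw [hfk, norm_mul, hnormk]
    exact mul_le_mul_of_nonneg_left hf2 (by positivity)
  rw [hrpow]
  calc ‖f ((t:ℂ)*I) - a 0‖ ≤ ‖f ((t:ℂ)*I)‖ + ‖a 0‖ := norm_sub_le _ _
    _ ≤ (t^k)⁻¹ * (‖a 0‖ + |C|) + 1 * ‖a 0‖ := by rw [one_mul]; gcongr
    _ ≤ (t^k)⁻¹ * (‖a 0‖ + |C|) + (t^k)⁻¹ * ‖a 0‖ := by gcongr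
    _ = (2 * ‖a 0‖ + |C|) * (t^k)⁻¹ := by ring

private lemma aux_flip (g : ℝ → ℂ) (s : ℂ) :
    ∫ t in Ioc (0:ℝ) 1, (t:ℂ)^(s-1) • g t = ∫ v in Ioi (1:ℝ), (v:ℂ)^(-s-1) • g v⁻¹ := by
  set Q : ℝ → ℂ := (Ici (1:ℝ)).indicator (fun v => g v⁻¹) with hQ
  have h1 : ∫ t in Ioc (0:ℝ) 1, (t:ℂ)^(s-1) • g t = mellin (fun t => Q t⁻¹) s := by
    rw [mellin]
    rw [setIntegral_congr_fun measurableSet_Ioi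
      (g := fun t : ℝ => (Ioc (0:ℝ) 1).indicator (fun u => (u:ℂ)^(s-1) • g u) t) ?_]
    · rw [setIntegral_indicator measurableSet_Ioc,
        inter_eq_self_of_subset_right Ioc_subset_Ioi_self]
    · intro t ht
      have ht0 : (0:ℝ) < t := ht
      dsimp only
      rcases le_or_gt t 1 with h|h
      · rw [hQ, indicator_of_mem (mem_Ici.mpr ((one_le_inv₀ ht0).mpr h)),
          indicator_of_mem (mem_Ioc.mpr ⟨ht0, h⟩), inv_inv]
      · rw [hQ, indicator_of_notMem, indicator_of_notMem]
        · simp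
        · exact fun hmem => absurd hmem.2 (not_le.mpr h)
        · rw [mem_Ici, not_le]
          exact inv_lt_one_of_one_lt₀ h
  have h2 : mellin (fun t => Q t⁻¹) s = mellin Q (-s) := mellin_comp_inv Q s
  have h3 : mellin Q (-s) = ∫ v in Ioi (1:ℝ), (v:ℂ)^(-s-1) • g v⁻¹ := by
    rw [mellin]
    rw [setIntegral_congr_fun measurableSet_Ioi
      (g := fun v : ℝ => (Ici (1:ℝ)).indicator (fun u => (u:ℂ)^(-s-1) • g u⁻¹) v) ?_]
    · rw [setIntegral_indicator measurableSet_Ici]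
      have : Ioi (0:ℝ) ∩ Ici 1 = Ici 1 :=
        inter_eq_self_of_subset_right (fun x hx => mem_Ioi.mpr (lt_of_lt_of_le one_pos hx))
      rw [this, integral_Ici_eq_integral_Ioi]
    · intro v hv
      dsimp only
      rcases le_or_gt 1 v with h|h
      · rw [hQ, indicator_of_mem (mem_Ici.mpr h), indicator_of_mem (mem_Ici.mpr h)]
      · rw [hQ, indicator_of_notMem (by rwa [mem_Ici, not_le]),
          indicator_of_notMem (by rwa [mem_Ici, not_le])]
        simp
  rw [h1, h2, h3]

/-- For a modular form `f(τ) = ∑_{n≥0} a_n e^{2πinτ}` of even weight `k` for `SL₂(ℤ)`, the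
completed `L`-function `Λ_f(s) = (2π)^{-s} Γ(s) ∑_{n≥1} a_n n^{-s}` has the integral
expression
`Λ_f(s) = ∫_1^∞ (f(iv)-a₀)v^{s-1}dv + i^k ∫_1^∞ (f(iv)-a₀)v^{k-s-1}dv - a₀/s - a₀i^k/(k-s)`
on a vertical strip where both sides are defined. -/
theorem completed_L_integral_expression (k : ℕ) (hk : 0 < k) (hke : Even k)
    (f : ℂ → ℂ) (a : ℕ → ℂ)
    (hf : ∀ τ : ℂ, 0 < τ.im → f τ = ∑' n : ℕ, a n * Complex.exp (2 * π * I * n * τ))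
    (hmod : ∀ τ : ℂ, 0 < τ.im → f (-1 / τ) = τ ^ k * f τ)
    (hdecay : ∃ c > (0:ℝ), ∃ C : ℝ, ∀ v : ℝ, 1 ≤ v →
      ‖f (v * I) - a 0‖ ≤ C * Real.exp (-c * v))
    (hsum : ∀ s : ℂ, (k : ℝ) < s.re →
      Summable (fun n : ℕ => a (n + 1) * ((n + 1 : ℕ) : ℂ) ^ (-s))) :
    ∀ s : ℂ, (k : ℝ) < s.re →
      ((2 * π : ℂ) ^ (-s)) * Complex.Gamma s *
          (∑' n : ℕ, a (n + 1) * ((n + 1 : ℕ) : ℂ) ^ (-s)) =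
        (∫ v in Ioi (1:ℝ), (f (v * I) - a 0) * (v : ℂ) ^ (s - 1)) +
        I ^ k * (∫ v in Ioi (1:ℝ), (f (v * I) - a 0) * (v : ℂ) ^ ((k : ℂ) - s - 1)) -
        a 0 / s - a 0 * I ^ k / ((k : ℂ) - s) := by
  obtain ⟨c, hc, C0, hdec⟩ := hdecay
  obtain ⟨Cb, hCb0, hCb⟩ := aux_bound k a
    (hsum ((k:ℂ)+1) (by simp))
  intro s hs
  have hk1 : (1:ℝ) ≤ (k:ℝ) := by exact_mod_cast hk
  have hs0 : (0:ℝ) < s.re := by linarith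
  -- the Mellin transform equals the completed L-function
  have hmel := aux_mellin k hk f a hsum
    (fun t ht => aux_hasSum k f a hf Cb hCb ht) hs
  -- integrability on (0, ∞)
  have hg_cont := aux_cont k f a hf Cb hCb
  have hMC : MellinConvergent (fun t : ℝ => f (t * I) - a 0) s :=
    mellinConvergent_of_isBigO_rpow (hg_cont.locallyIntegrableOn measurableSet_Ioi)
      (aux_top f a hc hdec (s.re+1)) (by linarith) (aux_zero k f a hmod hc hdec) hs
  have hInt0 : IntegrableOn (fun t : ℝ => (t:ℂ)^(s-1) • (f (t * I) - a 0)) (Ioi (0:ℝ)) := hMC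
  -- split the integral at 1
  have hsplit : mellin (fun t : ℝ => f (t * I) - a 0) s =
      (∫ t in Ioc (0:ℝ) 1, (t:ℂ)^(s-1) • (f (t * I) - a 0)) +
      ∫ t in Ioi (1:ℝ), (t:ℂ)^(s-1) • (f (t * I) - a 0) := by
    rw [mellin, ← Ioc_union_Ioi_eq_Ioi (zero_le_one (α := ℝ)),
      setIntegral_union (Ioc_disjoint_Ioi le_rfl) measurableSet_Ioi
        (hInt0.mono_set Ioc_subset_Ioi_self)
        (hInt0.mono_set (Ioi_subset_Ioi zero_le_one))]
  have hI1 : ∫ t in Ioi (1:ℝ), (t:ℂ)^(s-1) • (f (t * I) - a 0) =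
      ∫ v in Ioi (1:ℝ), (f (v * I) - a 0) * (v : ℂ) ^ (s - 1) :=
    setIntegral_congr_fun measurableSet_Ioi (fun v _ => by
      simp only [smul_eq_mul]; ring)
  have hflip := aux_flip (fun t : ℝ => f (t * I) - a 0) s
  -- pointwise functional equation on (1, ∞)
  have hfe : ∀ v ∈ Ioi (1:ℝ),
      (v:ℂ)^(-s-1) • (f ((v⁻¹ : ℝ) * I) - a 0) =
      I^k * ((f (v * I) - a 0) * (v:ℂ)^((k:ℂ)-s-1)) +
        (I^k * a 0) * (v:ℂ)^((k:ℂ)-s-1) - a 0 * (v:ℂ)^(-s-1) := by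
    intro v hv
    have hv0 : (0:ℝ) < v := lt_trans one_pos hv
    have hvC : ((v:ℂ)) ≠ 0 := ofReal_ne_zero.mpr hv0.ne'
    have hinv := aux_inv v hv0.ne'
    have hmod' := hmod ((v:ℂ)*I) (by simp [hv0])
    rw [hinv] at hmod'
    have hsplitp : (v:ℂ)^((k:ℂ)-s-1) = (v:ℂ)^(k:ℕ) * (v:ℂ)^(-s-1) := by
      rw [show (k:ℂ)-s-1 = (k:ℂ)+(-s-1) by ring, cpow_add _ _ hvC, cpow_natCast]
    rw [smul_eq_mul, hmod', hsplitp, mul_pow]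
    ring
  -- integrability of the three pieces on (1, ∞)
  have hcpowm : ∀ z : ℂ, AEStronglyMeasurable (fun v : ℝ => (v:ℂ)^z)
      (volume.restrict (Ioi (1:ℝ))) := by
    intro z
    refine ContinuousOn.aestronglyMeasurable (fun v hv => ?_) measurableSet_Ioi
    exact (Complex.continuousAt_ofReal_cpow_const _ _
      (Or.inr (lt_trans one_pos hv).ne')).continuousWithinAt
  have hgm : AEStronglyMeasurable (fun v : ℝ => f (v * I) - a 0)
      (volume.restrict (Ioi (1:ℝ))) :=
    ((hg_cont.mono (Ioi_subset_Ioi zero_le_one)).aestronglyMeasurable measurableSet_Ioi)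
  have iA : IntegrableOn (fun v : ℝ => (f (v * I) - a 0) * (v:ℂ)^((k:ℂ)-s-1)) (Ioi (1:ℝ)) := by
    have hexp : ((k:ℂ)-s-1).re < -1 := by
      simp only [Complex.sub_re, Complex.natCast_re, Complex.one_re]
      linarith
    refine Integrable.mono' ((integrableOn_Ioi_rpow_of_lt hexp zero_lt_one).const_mul |C0|)
      (hgm.mul (hcpowm _)) ?_
    filter_upwards [ae_restrict_mem measurableSet_Ioi] with v hv
    have hv0 : (0:ℝ) < v := lt_trans one_pos hv
    have hnc : ‖(v:ℂ)^((k:ℂ)-s-1)‖ = v ^ (((k:ℂ)-s-1).re) :=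
      Complex.norm_cpow_eq_rpow_re_of_pos hv0 _
    rw [norm_mul, hnc]
    have hb1 : ‖f (v * I) - a 0‖ ≤ |C0| := by
      have h1 := hdec v (le_of_lt hv)
      have h2 : Real.exp (-c * v) ≤ 1 := by
        apply Real.exp_le_one_iff.mpr
        nlinarith
      calc ‖f (v * I) - a 0‖ ≤ C0 * Real.exp (-c * v) := h1
        _ ≤ |C0| * Real.exp (-c * v) :=
            mul_le_mul_of_nonneg_right (le_abs_self C0) (Real.exp_pos _).le
        _ ≤ |C0| * 1 := mul_le_mul_of_nonneg_left h2 (abs_nonneg C0)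
        _ = |C0| := mul_one _
    exact mul_le_mul_of_nonneg_right hb1 (Real.rpow_nonneg hv0.le _)
  have hexpB : ((k:ℂ)-s-1).re < -1 := by
    simp only [Complex.sub_re, Complex.natCast_re, Complex.one_re]
    linarith
  have hexpC : (-s-1).re < -1 := by
    simp only [Complex.sub_re, Complex.neg_re, Complex.one_re]
    linarith
  have iB : IntegrableOn (fun v : ℝ => (I^k * a 0) * (v:ℂ)^((k:ℂ)-s-1)) (Ioi (1:ℝ)) :=
    (integrableOn_Ioi_cpow_of_lt hexpB zero_lt_one).const_mul _
  have iC : IntegrableOn (fun v : ℝ => a 0 * (v:ℂ)^(-s-1)) (Ioi (1:ℝ)) :=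
    (integrableOn_Ioi_cpow_of_lt hexpC zero_lt_one).const_mul _
  have iA' : IntegrableOn (fun v : ℝ => I^k * ((f (v * I) - a 0) * (v:ℂ)^((k:ℂ)-s-1)))
      (Ioi (1:ℝ)) := iA.const_mul _
  -- compute the flipped integral
  have hks : (k:ℂ) - s ≠ 0 := by
    intro h
    have := congrArg Complex.re h
    simp only [Complex.sub_re, Complex.natCast_re, Complex.zero_re] at this
    linarith
  have hsne : s ≠ 0 := by
    intro h
    rw [h] at hs0
    simp at hs0
  have hflip2 : ∫ v in Ioi (1:ℝ), (v:ℂ)^(-s-1) • (f ((v⁻¹ : ℝ) * I) - a 0) =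
      I^k * (∫ v in Ioi (1:ℝ), (f (v * I) - a 0) * (v:ℂ)^((k:ℂ)-s-1))
        - a 0 / s - a 0 * I^k / ((k:ℂ)-s) := by
    have iAB : IntegrableOn (fun v : ℝ => I^k * ((f (v * I) - a 0) * (v:ℂ)^((k:ℂ)-s-1)) +
        (I^k * a 0) * (v:ℂ)^((k:ℂ)-s-1)) (Ioi (1:ℝ)) := iA'.add iB
    rw [setIntegral_congr_fun measurableSet_Ioi hfe]
    rw [integral_sub iAB iC, integral_add iA' iB, integral_const_mul,
      integral_const_mul, integral_const_mul,
      integral_Ioi_cpow_of_lt hexpB zero_lt_one, integral_Ioi_cpow_of_lt hexpC zero_lt_one]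
    rw [show ((k:ℂ)-s-1)+1 = (k:ℂ)-s by ring, show (-s-1)+1 = -s by ring]
    rw [Complex.ofReal_one, one_cpow, one_cpow]
    field_simp
    simp only [sub_eq_neg_add]
    ring
  -- assemble
  rw [← hmel, hsplit, hI1, hflip, hflip2]
  push_cast
  ring
end
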